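/- arXiv:2404.02895 — 2 statements merged into one kernel-verified Lean document; each statement's English description precedes it below -/
import Mathlib

section
/- Let I ⊆ ℝ be an open interval and γ : I → ℝⁿ a three times continuously differentiable curve with γ'(t) ≠ 0 for all t ∈ I, where ℝⁿ carries the Euclidean inner product ⟨·,·⟩ with norm |·|. Then the following are equivalent: (i) there exists a continuously differentiable α : I → ℝⁿ such that γ'' + 2⟨α,γ'⟩γ' − |γ'|²α = 0 and α' − ⟨α,γ'⟩α + (1/2)|α|²γ' = 0 hold on I; (ii) γ''' − (3⟨γ',γ''⟩/|γ'|²)·γ'' + (3|γ''|²/(2|γ'|²))·γ' = 0 holds on I. -/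
open scoped RealInnerProductSpace

set_option maxHeartbeats 1000000

/-- For a `C³` curve `γ` in Euclidean `ℝⁿ` with nowhere vanishing velocity, the
existence of a `C¹` one-form `α` satisfying the two conformal geodesic equations (with
vanishing Schouten tensor) is equivalent to the third-order conformal geodesic ODE. -/
theorem conformal_geodesic_system_iff_third_order_ode (n : ℕ) (p q : ℝ)
    (γ : ℝ → EuclideanSpace ℝ (Fin n))
    (hγ : ContDiffOn ℝ 3 γ (Set.Ioo p q))
    (hne : ∀ t ∈ Set.Ioo p q, deriv γ t ≠ 0) :
    (∃ α : ℝ → EuclideanSpace ℝ (Fin n), ContDiffOn ℝ 1 α (Set.Ioo p q) ∧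
      ∀ t ∈ Set.Ioo p q,
        deriv (deriv γ) t + (2 * ⟪α t, deriv γ t⟫) • deriv γ t
            - (‖deriv γ t‖ ^ 2) • α t = 0 ∧
        deriv α t - ⟪α t, deriv γ t⟫ • α t + ((1 / 2) * ‖α t‖ ^ 2) • deriv γ t = 0) ↔
    (∀ t ∈ Set.Ioo p q,
        deriv (deriv (deriv γ)) t
            - (3 * ⟪deriv γ t, deriv (deriv γ) t⟫ / ‖deriv γ t‖ ^ 2) • deriv (deriv γ) t
            + (3 * ‖deriv (deriv γ) t‖ ^ 2 / (2 * ‖deriv γ t‖ ^ 2)) • deriv γ t = 0) := by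
  have hO : IsOpen (Set.Ioo p q) := isOpen_Ioo
  have hγ1 : ContDiffOn ℝ 2 (deriv γ) (Set.Ioo p q) := hγ.deriv_of_isOpen hO (by norm_num)
  have hγ2 : ContDiffOn ℝ 1 (deriv (deriv γ)) (Set.Ioo p q) := hγ1.deriv_of_isOpen hO (by norm_num)
  have hmem : ∀ t ∈ Set.Ioo p q, Set.Ioo p q ∈ nhds t := fun t ht => hO.mem_nhds ht
  have hd1 : ∀ t ∈ Set.Ioo p q, HasDerivAt (deriv γ) (deriv (deriv γ) t) t := fun t ht =>
    (((hγ1.differentiableOn (by norm_num)).differentiableAt (hmem t ht))).hasDerivAt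
  have hd2 : ∀ t ∈ Set.Ioo p q, HasDerivAt (deriv (deriv γ)) (deriv (deriv (deriv γ)) t) t :=
    fun t ht => (((hγ2.differentiableOn (by norm_num)).differentiableAt (hmem t ht))).hasDerivAt
  have hv : ∀ t ∈ Set.Ioo p q, ⟪deriv γ t, deriv γ t⟫ ≠ 0 := fun t ht =>
    inner_self_ne_zero.2 (hne t ht)
  constructor
  · rintro ⟨α, hα, h⟩
    intro t ht
    have hvt := hv t ht
    have hn1 : ‖deriv γ t‖ ^ 2 = ⟪deriv γ t, deriv γ t⟫ := (real_inner_self_eq_norm_sq _).symm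
    have hn2 : ‖deriv (deriv γ) t‖ ^ 2 = ⟪deriv (deriv γ) t, deriv (deriv γ) t⟫ :=
      (real_inner_self_eq_norm_sq _).symm
    have hnα : ‖α t‖ ^ 2 = ⟪α t, α t⟫ := (real_inner_self_eq_norm_sq _).symm
    have e1 := (h t ht).1
    have e2 := (h t ht).2
    rw [hn1] at e1
    rw [hnα] at e2
    have hD1 := hd1 t ht
    have hαd : HasDerivAt α (deriv α t) t :=
      ((hα.differentiableOn one_ne_zero).differentiableAt (hmem t ht)).hasDerivAt
    -- value of ⟪α t, γ' t⟫
    have hc : ⟪α t, deriv γ t⟫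
        = -(⟪deriv γ t, deriv (deriv γ) t⟫ / ⟪deriv γ t, deriv γ t⟫) := by
      have h0 : ⟪deriv (deriv γ) t + (2 * ⟪α t, deriv γ t⟫) • deriv γ t
          - ⟪deriv γ t, deriv γ t⟫ • α t, deriv γ t⟫ = (0 : ℝ) := by
        rw [e1, inner_zero_left]
      simp only [inner_add_left, inner_sub_left, real_inner_smul_left] at h0
      rw [real_inner_comm (deriv γ t) (deriv (deriv γ) t)] at h0
      rw [← neg_div, eq_comm, div_eq_iff hvt]
      linear_combination -h0
    -- closed form for α t
    have hαt : α t = (⟪deriv γ t, deriv γ t⟫)⁻¹ • deriv (deriv γ) t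
        - (2 * ⟪deriv γ t, deriv (deriv γ) t⟫ * ((⟪deriv γ t, deriv γ t⟫)⁻¹) ^ 2)
          • deriv γ t := by
      have h1 : ⟪deriv γ t, deriv γ t⟫ • α t
          = deriv (deriv γ) t + (2 * ⟪α t, deriv γ t⟫) • deriv γ t := by
        linear_combination (norm := module) -e1
      rw [hc] at h1
      have h2 := congrArg (fun x => (⟪deriv γ t, deriv γ t⟫)⁻¹ • x) h1
      simp only [smul_smul, inv_mul_cancel₀ hvt, one_smul] at h2
      rw [h2]
      match_scalars <;> (field_simp; try ring)
    -- deriv α t from e2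
    have hα' : deriv α t = ⟪α t, deriv γ t⟫ • α t - ((1/2) * ⟪α t, α t⟫) • deriv γ t := by
      linear_combination (norm := module) e2
    -- eventual equality for γ''
    have hEq : deriv (deriv γ) =ᶠ[nhds t]
        (fun s => ⟪deriv γ s, deriv γ s⟫ • α s - (2 * ⟪α s, deriv γ s⟫) • deriv γ s) := by
      filter_upwards [hmem t ht] with s hs
      have e := (h s hs).1
      rw [(real_inner_self_eq_norm_sq (deriv γ s)).symm] at e
      linear_combination (norm := module) e
    have hg3 : deriv (deriv (deriv γ)) t
        = deriv (fun s => ⟪deriv γ s, deriv γ s⟫ • α s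
            - (2 * ⟪α s, deriv γ s⟫) • deriv γ s) t := hEq.deriv_eq
    have hi11 : HasDerivAt (fun s => ⟪deriv γ s, deriv γ s⟫)
        (⟪deriv γ t, deriv (deriv γ) t⟫ + ⟪deriv (deriv γ) t, deriv γ t⟫) t :=
      hD1.inner ℝ hD1
    have hiαg : HasDerivAt (fun s => ⟪α s, deriv γ s⟫)
        (⟪α t, deriv (deriv γ) t⟫ + ⟪deriv α t, deriv γ t⟫) t := hαd.inner ℝ hD1
    have hF := (hi11.smul hαd).sub (((hasDerivAt_const t (2:ℝ)).mul hiαg).smul hD1)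
    rw [hn1, hn2, hg3, (show deriv (fun s => ⟪deriv γ s, deriv γ s⟫ • α s
        - (2 * ⟪α s, deriv γ s⟫) • deriv γ s) t = _ from hF.deriv), hα', hc, hαt]
    simp only [inner_sub_left, inner_sub_right, inner_add_left, inner_add_right,
      real_inner_smul_left, real_inner_smul_right]
    simp only [real_inner_comm (deriv γ t) (deriv (deriv γ) t), Pi.mul_apply, hc]
    set v := ⟪deriv γ t, deriv γ t⟫
    set a := ⟪deriv γ t, deriv (deriv γ) t⟫
    set b := ⟪deriv (deriv γ) t, deriv (deriv γ) t⟫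
    match_scalars <;> (field_simp; try ring)
  · intro hODE
    refine ⟨fun t => (⟪deriv γ t, deriv γ t⟫)⁻¹ • deriv (deriv γ) t
        - (2 * ⟪deriv γ t, deriv (deriv γ) t⟫ * ((⟪deriv γ t, deriv γ t⟫)⁻¹) ^ 2) • deriv γ t,
        ?_, ?_⟩
    · have hg1 : ContDiffOn ℝ 1 (deriv γ) (Set.Ioo p q) := hγ1.of_le (by norm_num)
      have hA : ContDiffOn ℝ 1 (fun t => (⟪deriv γ t, deriv γ t⟫)⁻¹) (Set.Ioo p q) :=
        ((hg1.inner ℝ hg1).inv hv)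
      exact (hA.smul hγ2).sub
        (((contDiffOn_const.mul (hg1.inner ℝ hγ2)).mul (hA.pow 2)).smul hg1)
    · intro t ht
      have hvt := hv t ht
      have hn1 : ‖deriv γ t‖ ^ 2 = ⟪deriv γ t, deriv γ t⟫ := (real_inner_self_eq_norm_sq _).symm
      constructor
      · have hα1 : ⟪(⟪deriv γ t, deriv γ t⟫)⁻¹ • deriv (deriv γ) t
            - (2 * ⟪deriv γ t, deriv (deriv γ) t⟫ * ((⟪deriv γ t, deriv γ t⟫)⁻¹) ^ 2)
              • deriv γ t, deriv γ t⟫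
            = -(⟪deriv γ t, deriv (deriv γ) t⟫ / ⟪deriv γ t, deriv γ t⟫) := by
          simp only [inner_sub_left, real_inner_smul_left,
            real_inner_comm (deriv (deriv γ) t) (deriv γ t)]
          set v := ⟪deriv γ t, deriv γ t⟫
          set a := ⟪deriv γ t, deriv (deriv γ) t⟫
          field_simp
          ring
        simp only
        rw [hα1, hn1]
        set v := ⟪deriv γ t, deriv γ t⟫
        set a := ⟪deriv γ t, deriv (deriv γ) t⟫
        match_scalars <;> (field_simp; try ring)
      · have hn2 : ‖deriv (deriv γ) t‖ ^ 2 = ⟪deriv (deriv γ) t, deriv (deriv γ) t⟫ :=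
          (real_inner_self_eq_norm_sq _).symm
        have hD1 := hd1 t ht
        have hD2 := hd2 t ht
        have hi11 : HasDerivAt (fun s => ⟪deriv γ s, deriv γ s⟫)
            (⟪deriv γ t, deriv (deriv γ) t⟫ + ⟪deriv (deriv γ) t, deriv γ t⟫) t :=
          hD1.inner ℝ hD1
        have hf : HasDerivAt (fun s => (⟪deriv γ s, deriv γ s⟫)⁻¹)
            (-(⟪deriv γ t, deriv (deriv γ) t⟫ + ⟪deriv (deriv γ) t, deriv γ t⟫)
              / (⟪deriv γ t, deriv γ t⟫) ^ 2) t := hi11.inv hvt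
        have hi12 : HasDerivAt (fun s => ⟪deriv γ s, deriv (deriv γ) s⟫)
            (⟪deriv γ t, deriv (deriv (deriv γ)) t⟫
              + ⟪deriv (deriv γ) t, deriv (deriv γ) t⟫) t := hD1.inner ℝ hD2
        have hcoef := ((hasDerivAt_const t (2:ℝ)).mul hi12).mul (hf.pow 2)
        have hder := (hf.smul hD2).sub (hcoef.smul hD1)
        have hdeq : deriv (fun t => (⟪deriv γ t, deriv γ t⟫)⁻¹ • deriv (deriv γ) t
            - (2 * ⟪deriv γ t, deriv (deriv γ) t⟫ * ((⟪deriv γ t, deriv γ t⟫)⁻¹) ^ 2)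
              • deriv γ t) t = _ := hder.deriv
        have h := hODE t ht
        rw [hn1, hn2] at h
        have h3 : deriv (deriv (deriv γ)) t
            = (3 * ⟪deriv γ t, deriv (deriv γ) t⟫ / ⟪deriv γ t, deriv γ t⟫) • deriv (deriv γ) t
              - (3 * ⟪deriv (deriv γ) t, deriv (deriv γ) t⟫
                / (2 * ⟪deriv γ t, deriv γ t⟫)) • deriv γ t := by
          linear_combination (norm := module) h
        simp only
        rw [hdeq, h3, ← real_inner_self_eq_norm_sq]
        simp only [inner_sub_left, inner_sub_right, inner_add_left, inner_add_right,
          real_inner_smul_left, real_inner_smul_right]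
        simp only [real_inner_comm (deriv (deriv γ) t) (deriv γ t), Pi.mul_apply, Pi.pow_apply,
          Nat.reduceSub, pow_one]
        set v := ⟪deriv γ t, deriv γ t⟫
        set a := ⟪deriv γ t, deriv (deriv γ) t⟫
        set b := ⟪deriv (deriv γ) t, deriv (deriv γ) t⟫
        match_scalars <;> (field_simp; try ring)
end

section
/- Let γ : I → ℝⁿ (n ≥ 2) be a smooth curve on an open interval with γ'(t) ≠ 0 for all t, λ = |γ'|, let x₂ : I → ℝ and y₂ : I → ℝⁿ be smooth, and define u(t,s) = (s·λ(t) + s²·x₂(t), γ(t) + s²·y₂(t)) for small s > 0. Then τ(u)⁰ = o(s²) and τ(u)ⁱ = o(s²) for all 1 ≤ i ≤ n (as s → 0⁺, locally uniformly in t) if and only if x₂ ≡ 0 and y₂ = (1/2)·( γ'' − (2⟨γ',γ''⟩/λ²)·γ' ), i.e. y₂ = (1/2)λ²α where α = (1/λ²)(γ'' − (2⟨γ',γ''⟩/λ²)γ'). -/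
open scoped RealInnerProductSpace

noncomputable section

/-- `ℝⁿ` with the Euclidean inner product. -/
abbrev Euc (n : ℕ) : Type := EuclideanSpace ℝ (Fin n)

/-- Partial derivative in the boundary variable `t`. -/
def pdt {α : Type*} [NormedAddCommGroup α] [NormedSpace ℝ α]
    (f : ℝ → ℝ → α) (t s : ℝ) : α := deriv (fun t' => f t' s) t

/-- Partial derivative in the boundary defining variable `s`. -/
def pds {α : Type*} [NormedAddCommGroup α] [NormedSpace ℝ α]
    (f : ℝ → ℝ → α) (t s : ℝ) : α := deriv (fun s' => f t s') s

/-- Normal component `τ(u)⁰` of the tension field of the map `u = (x, y)` from the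
hyperbolic upper half-plane `{(t,s) : s > 0}` with metric `(dt² + ds²)/s²` to the upper
half-space `{(x,y) : x > 0}` with metric `(dx² + |dy|²)/x²`:
`τ(u)⁰ = s²[∂ₛ²x + ∂ₜ²x − ((∂ₛx)² + (∂ₜx)²)/x + (|∂ₛy|² + |∂ₜy|²)/x]`. -/
def tau0 {n : ℕ} (x : ℝ → ℝ → ℝ) (y : ℝ → ℝ → Euc n) (t s : ℝ) : ℝ :=
  s ^ 2 * (pds (pds x) t s + pdt (pdt x) t s
    - ((pds x t s) ^ 2 + (pdt x t s) ^ 2) / x t s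
    + (‖pds y t s‖ ^ 2 + ‖pdt y t s‖ ^ 2) / x t s)

/-- Tangential components `(τ(u)ⁱ)ᵢ` of the tension field, as a vector in `ℝⁿ`:
`τ(u)ⁱ = s²[∂ₛ²yⁱ + ∂ₜ²yⁱ − (2/x)(∂ₛx·∂ₛyⁱ + ∂ₜx·∂ₜyⁱ)]`. -/
def tauTan {n : ℕ} (x : ℝ → ℝ → ℝ) (y : ℝ → ℝ → Euc n) (t s : ℝ) : Euc n :=
  (s ^ 2) • (pds (pds y) t s + pdt (pdt y) t s
    - (2 / x t s) • (pds x t s • pds y t s + pdt x t s • pdt y t s))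

/-- `F(t,s) = o(sᵏ)` as `s → 0⁺`, locally uniformly in `t ∈ I`. -/
def LittleOAt (I : Set ℝ) (F : ℝ → ℝ → ℝ) (k : ℕ) : Prop :=
  ∀ K : Set ℝ, K ⊆ I → IsCompact K → ∀ ε : ℝ, 0 < ε → ∃ δ : ℝ, 0 < δ ∧
    ∀ s : ℝ, 0 < s → s < δ → ∀ t ∈ K, |F t s| ≤ ε * s ^ k

/-- `F(t,s) = O(sᵏ)` as `s → 0⁺`, locally uniformly in `t ∈ I`. -/
def BigOAt (I : Set ℝ) (F : ℝ → ℝ → ℝ) (k : ℕ) : Prop :=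
  ∀ K : Set ℝ, K ⊆ I → IsCompact K → ∃ C : ℝ, 0 < C ∧ ∃ δ : ℝ, 0 < δ ∧
    ∀ s : ℝ, 0 < s → s < δ → ∀ t ∈ K, |F t s| ≤ C * s ^ k

section PD
variable {n : ℕ} (lamf x2 : ℝ → ℝ) (gam y2 : ℝ → Euc n)

lemma pds_x (t s : ℝ) :
    pds (fun t' s' => s' * lamf t' + s' ^ 2 * x2 t') t s = lamf t + 2*s*(x2 t) := by
  have h : HasDerivAt (fun s' : ℝ => s' * lamf t + s' ^ 2 * x2 t) (lamf t + 2*s*(x2 t)) s := by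
    have h1 := (hasDerivAt_id s).mul_const (lamf t)
    have h2 := (hasDerivAt_pow 2 s).mul_const (x2 t)
    simpa [mul_comm] using h1.fun_add h2
  simpa [pds] using h.deriv

lemma pds_pds_x (t s : ℝ) :
    pds (pds (fun t' s' => s' * lamf t' + s' ^ 2 * x2 t')) t s = 2 * x2 t := by
  have he : (fun s' => pds (fun t' s' => s' * lamf t' + s' ^ 2 * x2 t') t s')
      = fun s' => lamf t + 2*s'*(x2 t) := funext fun s' => pds_x lamf x2 t s'
  rw [pds, he]
  have h : HasDerivAt (fun s' : ℝ => lamf t + 2*s'*(x2 t)) (2 * x2 t) s := by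
    simpa [mul_assoc] using (((hasDerivAt_id s).const_mul (2:ℝ)).mul_const (x2 t)).const_add (lamf t)
  exact h.deriv

lemma pds_y (t s : ℝ) :
    pds (fun t' s' => gam t' + (s' ^ 2) • y2 t') t s = (2*s) • y2 t := by
  have h : HasDerivAt (fun s' : ℝ => gam t + (s' ^ 2) • y2 t) ((2*s) • y2 t) s := by
    simpa [mul_comm] using (((hasDerivAt_pow 2 s)).smul_const (y2 t)).const_add (gam t)
  simpa [pds] using h.deriv

lemma pds_pds_y (t s : ℝ) :
    pds (pds (fun t' s' => gam t' + (s' ^ 2) • y2 t')) t s = (2:ℝ) • y2 t := by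
  have he : (fun s' => pds (fun t' s' => gam t' + (s' ^ 2) • y2 t') t s')
      = fun s' => (2*s') • y2 t := funext fun s' => pds_y gam y2 t s'
  rw [pds, he]
  have h : HasDerivAt (fun s' : ℝ => (2*s') • y2 t) ((2:ℝ) • y2 t) s := by
    simpa using ((hasDerivAt_id s).const_mul (2:ℝ)).smul_const (y2 t)
  exact h.deriv

variable {lamf x2 gam y2}

lemma pdt_x {t : ℝ} (s : ℝ) {l1 ξ1 : ℝ} (hl : HasDerivAt lamf l1 t) (hx : HasDerivAt x2 ξ1 t) :
    pdt (fun t' s' => s' * lamf t' + s' ^ 2 * x2 t') t s = s * l1 + s^2 * ξ1 := by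
  have h : HasDerivAt (fun t' => s * lamf t' + s ^ 2 * x2 t') (s * l1 + s^2 * ξ1) t :=
    (hl.const_mul s).add (hx.const_mul (s^2))
  simpa [pdt] using h.deriv

lemma pdt_y {t : ℝ} (s : ℝ) {c1 y1 : Euc n} (hg : HasDerivAt gam c1 t) (hy : HasDerivAt y2 y1 t) :
    pdt (fun t' s' => gam t' + (s' ^ 2) • y2 t') t s = c1 + (s^2) • y1 := by
  have h : HasDerivAt (fun t' => gam t' + (s ^ 2) • y2 t') (c1 + (s^2) • y1) t :=
    hg.add (hy.const_smul (s^2))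
  simpa [pdt] using h.deriv
end PD

section PD2
variable {n : ℕ} {lamf x2 : ℝ → ℝ} {gam y2 : ℝ → Euc n}

lemma pdt_pdt_x {t s : ℝ} {l2 ξ2 : ℝ}
    (hE : (fun t' => pdt (fun t' s' => s' * lamf t' + s' ^ 2 * x2 t') t' s)
        =ᶠ[nhds t] (fun t' => s * deriv lamf t' + s ^ 2 * deriv x2 t'))
    (hl : HasDerivAt (deriv lamf) l2 t) (hx : HasDerivAt (deriv x2) ξ2 t) :
    pdt (pdt (fun t' s' => s' * lamf t' + s' ^ 2 * x2 t')) t s = s * l2 + s^2 * ξ2 := by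
  have h : HasDerivAt (fun t' => s * deriv lamf t' + s ^ 2 * deriv x2 t')
      (s * l2 + s^2 * ξ2) t := (hl.const_mul s).add (hx.const_mul (s^2))
  rw [pdt, hE.deriv_eq]
  exact h.deriv

lemma pdt_pdt_y {t s : ℝ} {c2 y2'' : Euc n}
    (hE : (fun t' => pdt (fun t' s' => gam t' + (s' ^ 2) • y2 t') t' s)
        =ᶠ[nhds t] (fun t' => deriv gam t' + (s ^ 2) • deriv y2 t'))
    (hg : HasDerivAt (deriv gam) c2 t) (hy : HasDerivAt (deriv y2) y2'' t) :
    pdt (pdt (fun t' s' => gam t' + (s' ^ 2) • y2 t')) t s = c2 + (s^2) • y2'' := by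
  have h : HasDerivAt (fun t' => deriv gam t' + (s ^ 2) • deriv y2 t')
      (c2 + (s^2) • y2'') t := hg.add (hy.const_smul (s^2))
  rw [pdt, hE.deriv_eq]
  exact h.deriv

lemma lam_deriv_formula {t l1 : ℝ} {c2 : Euc n}
    (hlam : HasDerivAt (fun u => ‖deriv gam u‖) l1 t)
    (hg2 : HasDerivAt (deriv gam) c2 t) (hne : deriv gam t ≠ 0) :
    l1 = ⟪deriv gam t, c2⟫ / ‖deriv gam t‖ := by
  have h1 : HasDerivAt (fun u => ‖deriv gam u‖ ^ 2) (2 * ‖deriv gam t‖ * l1) t := by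
    simpa using hlam.fun_pow 2
  have h2 : HasDerivAt (fun u => ‖deriv gam u‖ ^ 2) (2 * ⟪deriv gam t, c2⟫) t := by
    have h3 : HasDerivAt (fun u => ⟪deriv gam u, deriv gam u⟫)
        (⟪deriv gam t, c2⟫ + ⟪c2, deriv gam t⟫) t := hg2.inner ℝ hg2
    have : (fun u => ⟪deriv gam u, deriv gam u⟫) = fun u => ‖deriv gam u‖ ^ 2 := by
      funext u; exact real_inner_self_eq_norm_sq _
    rw [this] at h3
    convert h3 using 1
    rw [real_inner_comm c2 (deriv gam t)]; ring
  have := h1.unique h2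
  have hL : ‖deriv gam t‖ ≠ 0 := norm_ne_zero_iff.2 hne
  rw [eq_div_iff hL]
  linarith [this]
end PD2

lemma tau0_algebra (s L X0 l1 ξ1 l2 ξ2 nY0sq ip nY1sq : ℝ) (hs : s ≠ 0) :
    s^2 * (2*X0 + (s*l2 + s^2*ξ2)
      - ((L+2*s*X0)^2 + (s*l1+s^2*ξ1)^2)/(s*L+s^2*X0)
      + (4*s^2*nY0sq + (L^2 + 2*s^2*ip + s^4*nY1sq))/(s*L+s^2*X0))
    = s^2 * (2*X0 + s*l2 + s^2*ξ2
      + (-4*L*X0 + s*(2*ip + 4*nY0sq - 4*X0^2 - l1^2 - 2*s*l1*ξ1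
          + s^2*(nY1sq - ξ1^2)))/(L+s*X0)) := by
  have hden : s*L+s^2*X0 = s*(L+s*X0) := by ring
  by_cases h : L + s*X0 = 0
  · rw [hden, h, mul_zero, div_zero, div_zero, div_zero]; ring
  · rw [hden]
    field_simp
    ring

lemma tauTan_algebra {E : Type*} [AddCommGroup E] [Module ℝ E]
    (s L l1 : ℝ) (Y0 C1 C2 Y1 Y2 : E) (hs : s ≠ 0) (hL : L ≠ 0) :
    (s^2) • ((2:ℝ)•Y0 + (C2 + (s^2)•Y2)
      - (2/(s*L)) • (L • ((2*s)•Y0) + (s*l1) • (C1 + (s^2)•Y1)))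
    = (s^2) • ((C2 - (2:ℝ)•Y0 - (2*l1/L)•C1) + (s^2)•(Y2 - (2*l1/L)•Y1)) := by
  match_scalars <;> field_simp <;> ring

section Aux
variable {E : Type*} [NormedAddCommGroup E] [NormedSpace ℝ E] {a b t : ℝ} {f : ℝ → E}

lemma myContDiffOn_deriv (hf : ContDiffOn ℝ (⊤:ℕ∞) f (Set.Ioo a b)) :
    ContDiffOn ℝ (⊤:ℕ∞) (deriv f) (Set.Ioo a b) :=
  hf.deriv_of_isOpen isOpen_Ioo (by exact_mod_cast le_top)

lemma myHasDerivAt (hf : ContDiffOn ℝ (⊤:ℕ∞) f (Set.Ioo a b)) (ht : t ∈ Set.Ioo a b) :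
    HasDerivAt f (deriv f t) t :=
  (((hf.differentiableOn (by simp)).differentiableAt
    (Ioo_mem_nhds ht.1 ht.2))).hasDerivAt

lemma myContinuousOn (hf : ContDiffOn ℝ (⊤:ℕ∞) f (Set.Ioo a b)) :
    ContinuousOn f (Set.Ioo a b) := hf.continuousOn
end Aux

section Main
variable {n : ℕ} {a b : ℝ} {γ y₂ : ℝ → Euc n} {x₂ : ℝ → ℝ}

lemma lam_smooth (hγ : ContDiffOn ℝ (⊤:ℕ∞) γ (Set.Ioo a b))
    (hγ' : ∀ t ∈ Set.Ioo a b, deriv γ t ≠ 0) :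
    ContDiffOn ℝ (⊤:ℕ∞) (fun u => ‖deriv γ u‖) (Set.Ioo a b) := fun t ht =>
  (((myContDiffOn_deriv hγ).contDiffAt (isOpen_Ioo.mem_nhds ht)).norm ℝ
    (hγ' t ht)).contDiffWithinAt

lemma pd_package (hγ : ContDiffOn ℝ (⊤:ℕ∞) γ (Set.Ioo a b))
    (hγ' : ∀ t ∈ Set.Ioo a b, deriv γ t ≠ 0)
    (hx₂ : ContDiffOn ℝ (⊤:ℕ∞) x₂ (Set.Ioo a b))
    (hy₂ : ContDiffOn ℝ (⊤:ℕ∞) y₂ (Set.Ioo a b))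
    {t : ℝ} (ht : t ∈ Set.Ioo a b) (s : ℝ) :
    pds (fun t' s' => s' * ‖deriv γ t'‖ + s' ^ 2 * x₂ t') t s = ‖deriv γ t‖ + 2*s*(x₂ t) ∧
    pds (pds (fun t' s' => s' * ‖deriv γ t'‖ + s' ^ 2 * x₂ t')) t s = 2 * x₂ t ∧
    pdt (fun t' s' => s' * ‖deriv γ t'‖ + s' ^ 2 * x₂ t') t s
      = s * deriv (fun u => ‖deriv γ u‖) t + s^2 * deriv x₂ t ∧
    pdt (pdt (fun t' s' => s' * ‖deriv γ t'‖ + s' ^ 2 * x₂ t')) t s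
      = s * deriv (deriv (fun u => ‖deriv γ u‖)) t + s^2 * deriv (deriv x₂) t ∧
    pds (fun t' s' => γ t' + (s' ^ 2) • y₂ t') t s = (2*s) • y₂ t ∧
    pds (pds (fun t' s' => γ t' + (s' ^ 2) • y₂ t')) t s = (2:ℝ) • y₂ t ∧
    pdt (fun t' s' => γ t' + (s' ^ 2) • y₂ t') t s = deriv γ t + (s^2) • deriv y₂ t ∧
    pdt (pdt (fun t' s' => γ t' + (s' ^ 2) • y₂ t')) t s
      = deriv (deriv γ) t + (s^2) • deriv (deriv y₂) t := by
  have hlam := lam_smooth hγ hγ'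
  have hmem := isOpen_Ioo.mem_nhds ht
  refine ⟨by simpa using pds_x (fun u => ‖deriv γ u‖) x₂ t s,
    pds_pds_x (fun u => ‖deriv γ u‖) x₂ t s,
    pdt_x s (myHasDerivAt hlam ht) (myHasDerivAt hx₂ ht), ?_,
    pds_y γ y₂ t s, pds_pds_y γ y₂ t s,
    pdt_y s (myHasDerivAt hγ ht) (myHasDerivAt hy₂ ht), ?_⟩
  · refine pdt_pdt_x ?_ (myHasDerivAt (myContDiffOn_deriv hlam) ht)
      (myHasDerivAt (myContDiffOn_deriv hx₂) ht)
    filter_upwards [hmem] with u hu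
    exact pdt_x s (myHasDerivAt hlam hu) (myHasDerivAt hx₂ hu)
  · refine pdt_pdt_y ?_ (myHasDerivAt (myContDiffOn_deriv hγ) ht)
      (myHasDerivAt (myContDiffOn_deriv hy₂) ht)
    filter_upwards [hmem] with u hu
    exact pdt_y s (myHasDerivAt hγ hu) (myHasDerivAt hy₂ hu)

end Main

section Exact
variable {n : ℕ}

lemma norm_two_smul_sq (s : ℝ) (v : Euc n) : ‖(2*s) • v‖^2 = 4*s^2*‖v‖^2 := by
  rw [norm_smul, Real.norm_eq_abs, mul_pow, sq_abs]; ring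

lemma norm_add_smul_sq (v w : Euc n) (s : ℝ) :
    ‖v + (s^2) • w‖^2 = ‖v‖^2 + 2*s^2*⟪v,w⟫ + s^4*‖w‖^2 := by
  rw [norm_add_sq_real, real_inner_smul_right, norm_smul, Real.norm_eq_abs, mul_pow, sq_abs]
  ring

lemma tau0_exact (x : ℝ → ℝ → ℝ) (y : ℝ → ℝ → Euc n) (t s : ℝ) (hs : s ≠ 0)
    (L X0 Λ₁ Λ₂ Ξ₁ Ξ₂ : ℝ) (C1 Y0 Y1 : Euc n)
    (hxval : x t s = s * L + s^2 * X0)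
    (h1 : pds x t s = L + 2*s*X0)
    (h2 : pds (pds x) t s = 2*X0)
    (h3 : pdt x t s = s*Λ₁ + s^2*Ξ₁)
    (h4 : pdt (pdt x) t s = s*Λ₂ + s^2*Ξ₂)
    (h5 : pds y t s = (2*s) • Y0)
    (h6 : pdt y t s = C1 + (s^2) • Y1)
    (hC1 : ‖C1‖ = L) :
    tau0 x y t s = s^2 * (2*X0 + s*Λ₂ + s^2*Ξ₂
      + (-4*L*X0 + s*(2*⟪C1,Y1⟫ + 4*‖Y0‖^2 - 4*X0^2 - Λ₁^2 - 2*s*Λ₁*Ξ₁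
          + s^2*(‖Y1‖^2 - Ξ₁^2)))/(L + s*X0)) := by
  rw [tau0, hxval, h1, h2, h3, h4, h5, h6, norm_two_smul_sq, norm_add_smul_sq, hC1]
  exact tau0_algebra s L X0 Λ₁ Ξ₁ Λ₂ Ξ₂ (‖Y0‖^2) ⟪C1,Y1⟫ (‖Y1‖^2) hs

lemma tauTan_exact (x : ℝ → ℝ → ℝ) (y : ℝ → ℝ → Euc n) (t s : ℝ) (hs : s ≠ 0)
    (L Λ₁ : ℝ) (hL : L ≠ 0) (C1 C2 Y0 Y1 Y2 : Euc n)
    (hxval : x t s = s * L)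
    (h1 : pds x t s = L)
    (h3 : pdt x t s = s*Λ₁)
    (h5 : pds y t s = (2*s) • Y0)
    (h5' : pds (pds y) t s = (2:ℝ) • Y0)
    (h6 : pdt y t s = C1 + (s^2) • Y1)
    (h6' : pdt (pdt y) t s = C2 + (s^2) • Y2) :
    tauTan x y t s = (s^2) • ((C2 - (2:ℝ)•Y0 - (2*Λ₁/L)•C1) + (s^2) • (Y2 - (2*Λ₁/L)•Y1)) := by
  rw [tauTan, hxval, h1, h3, h5, h5', h6, h6']
  exact tauTan_algebra s L Λ₁ Y0 C1 C2 Y1 Y2 hs hL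

end Exact

section MainLemmas
variable {n : ℕ} {a b : ℝ} {γ y₂ : ℝ → Euc n} {x₂ : ℝ → ℝ}

lemma abs_le_of_littleo {Φ : ℝ → ℝ} {c ε : ℝ} (hε : 0 < ε)
    (hten : Filter.Tendsto Φ (nhdsWithin (0:ℝ) (Set.Ioi 0)) (nhds c))
    (hev : ∀ᶠ s in nhdsWithin (0:ℝ) (Set.Ioi 0), |Φ s| ≤ ε) : |c| ≤ ε :=
  le_of_tendsto hten.abs hev

lemma eq_zero_of_forall_abs_le {c : ℝ} (h : ∀ ε > 0, |c| ≤ ε) : c = 0 := by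
  by_contra hne
  have h1 := h (|c|/2) (by simpa using abs_pos.2 hne)
  have h2 := abs_pos.2 hne
  linarith

lemma forward_x (hγ : ContDiffOn ℝ (⊤:ℕ∞) γ (Set.Ioo a b))
    (hγ' : ∀ t ∈ Set.Ioo a b, deriv γ t ≠ 0)
    (hx₂ : ContDiffOn ℝ (⊤:ℕ∞) x₂ (Set.Ioo a b))
    (hy₂ : ContDiffOn ℝ (⊤:ℕ∞) y₂ (Set.Ioo a b))
    (hA : LittleOAt (Set.Ioo a b) (fun t s =>
        |tau0 (fun t' s' => s' * ‖deriv γ t'‖ + s' ^ 2 * x₂ t')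
          (fun t' s' => γ t' + (s' ^ 2) • y₂ t') t s|) 2) :
    ∀ t ∈ Set.Ioo a b, x₂ t = 0 := by
  intro t ht
  have hL : ‖deriv γ t‖ ≠ 0 := norm_ne_zero_iff.2 (hγ' t ht)
  set L : ℝ := ‖deriv γ t‖ with hLdef
  set X0 : ℝ := x₂ t with hX0def
  set Λ₁ : ℝ := deriv (fun u => ‖deriv γ u‖) t with hΛ₁def
  set Λ₂ : ℝ := deriv (deriv (fun u => ‖deriv γ u‖)) t with hΛ₂def
  set Ξ₁ : ℝ := deriv x₂ t with hΞ₁def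
  set Ξ₂ : ℝ := deriv (deriv x₂) t with hΞ₂def
  set C1 : Euc n := deriv γ t with hC1def
  set ip : ℝ := ⟪deriv γ t, deriv y₂ t⟫ with hipdef
  set nY0 : ℝ := ‖y₂ t‖^2 with hnY0def
  set nY1 : ℝ := ‖deriv y₂ t‖^2 with hnY1def
  set Φ : ℝ → ℝ := fun s => 2*X0 + s*Λ₂ + s^2*Ξ₂
      + (-4*L*X0 + s*(2*ip + 4*nY0 - 4*X0^2 - Λ₁^2 - 2*s*Λ₁*Ξ₁
          + s^2*(nY1 - Ξ₁^2)))/(L + s*X0) with hΦdef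
  have key : ∀ s : ℝ, s ≠ 0 → tau0 (fun t' s' => s' * ‖deriv γ t'‖ + s' ^ 2 * x₂ t')
      (fun t' s' => γ t' + (s' ^ 2) • y₂ t') t s = s^2 * Φ s := by
    intro s hs
    obtain ⟨p1,p2,p3,p4,p5,_,p7,_⟩ := pd_package hγ hγ' hx₂ hy₂ ht s
    exact tau0_exact _ _ t s hs L X0 Λ₁ Λ₂ Ξ₁ Ξ₂ C1 (y₂ t) (deriv y₂ t)
      rfl p1 p2 p3 p4 p5 p7 rfl
  have hcont : ContinuousAt Φ 0 := by
    have hp : ContinuousAt (fun s : ℝ => 2*X0 + s*Λ₂ + s^2*Ξ₂) 0 := by fun_prop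
    have hnum : ContinuousAt (fun s : ℝ => -4*L*X0 + s*(2*ip + 4*nY0 - 4*X0^2 - Λ₁^2
        - 2*s*Λ₁*Ξ₁ + s^2*(nY1 - Ξ₁^2))) 0 := by fun_prop
    have hden : ContinuousAt (fun s : ℝ => L + s*X0) 0 := by fun_prop
    exact hp.add (hnum.div hden (by simpa using hL))
  have hval : Φ 0 = -2*X0 := by
    simp only [hΦdef]
    norm_num
    field_simp
    ring
  have hten : Filter.Tendsto Φ (nhdsWithin (0:ℝ) (Set.Ioi 0)) (nhds (-2*X0)) := by
    rw [← hval]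
    exact (hcont.tendsto).mono_left nhdsWithin_le_nhds
  have hsmall : ∀ ε > 0, |-2*X0| ≤ ε := by
    intro ε hε
    obtain ⟨δ, hδ, hB⟩ := hA {t} (Set.singleton_subset_iff.2 ht) isCompact_singleton ε hε
    refine abs_le_of_littleo hε hten ?_
    filter_upwards [Ioo_mem_nhdsGT_of_mem (Set.left_mem_Ico.2 hδ)] with s hs
    have h2 := hB s hs.1 hs.2 t rfl
    rw [abs_abs, key s (ne_of_gt hs.1), abs_mul, abs_of_pos (pow_pos hs.1 2)] at h2
    have hs2 : (0:ℝ) < s^2 := pow_pos hs.1 2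
    nlinarith [h2]
  have := eq_zero_of_forall_abs_le hsmall
  linarith

lemma derivs_zero (hx0 : ∀ u ∈ Set.Ioo a b, x₂ u = 0) {t : ℝ} (ht : t ∈ Set.Ioo a b) :
    deriv x₂ t = 0 ∧ deriv (deriv x₂) t = 0 := by
  have h1 : ∀ u ∈ Set.Ioo a b, deriv x₂ u = 0 := by
    intro u hu
    have he : x₂ =ᶠ[nhds u] fun _ => 0 :=
      Filter.eventuallyEq_of_mem (isOpen_Ioo.mem_nhds hu) hx0
    rw [he.deriv_eq]; exact deriv_const u 0
  refine ⟨h1 t ht, ?_⟩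
  have he : deriv x₂ =ᶠ[nhds t] fun _ => 0 :=
    Filter.eventuallyEq_of_mem (isOpen_Ioo.mem_nhds ht) h1
  rw [he.deriv_eq]; exact deriv_const t 0

lemma tauTan_key (hγ : ContDiffOn ℝ (⊤:ℕ∞) γ (Set.Ioo a b))
    (hγ' : ∀ t ∈ Set.Ioo a b, deriv γ t ≠ 0)
    (hx₂ : ContDiffOn ℝ (⊤:ℕ∞) x₂ (Set.Ioo a b))
    (hy₂ : ContDiffOn ℝ (⊤:ℕ∞) y₂ (Set.Ioo a b))
    (hx0 : ∀ u ∈ Set.Ioo a b, x₂ u = 0)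
    {t : ℝ} (ht : t ∈ Set.Ioo a b) {s : ℝ} (hs : s ≠ 0) :
    tauTan (fun t' s' => s' * ‖deriv γ t'‖ + s' ^ 2 * x₂ t')
      (fun t' s' => γ t' + (s' ^ 2) • y₂ t') t s
    = (s^2) • ((deriv (deriv γ) t - (2:ℝ) • y₂ t
        - (2 * deriv (fun u => ‖deriv γ u‖) t / ‖deriv γ t‖) • deriv γ t)
      + (s^2) • (deriv (deriv y₂) t
        - (2 * deriv (fun u => ‖deriv γ u‖) t / ‖deriv γ t‖) • deriv y₂ t)) := by
  have hL : ‖deriv γ t‖ ≠ 0 := norm_ne_zero_iff.2 (hγ' t ht)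
  obtain ⟨p1,_,p3,_,p5,p6,p7,p8⟩ := pd_package hγ hγ' hx₂ hy₂ ht s
  obtain ⟨hd1, hd2⟩ := derivs_zero hx0 ht
  refine tauTan_exact _ _ t s hs (‖deriv γ t‖) (deriv (fun u => ‖deriv γ u‖) t) hL
    (deriv γ t) (deriv (deriv γ) t) (y₂ t) (deriv y₂ t) (deriv (deriv y₂) t)
    ?_ ?_ ?_ p5 p6 p7 p8
  · show s * ‖deriv γ t‖ + s ^ 2 * x₂ t = s * ‖deriv γ t‖
    rw [hx0 t ht]; ring
  · rw [p1, hx0 t ht]; ring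
  · rw [p3, hd1]; ring

lemma forward_y (hγ : ContDiffOn ℝ (⊤:ℕ∞) γ (Set.Ioo a b))
    (hγ' : ∀ t ∈ Set.Ioo a b, deriv γ t ≠ 0)
    (hx₂ : ContDiffOn ℝ (⊤:ℕ∞) x₂ (Set.Ioo a b))
    (hy₂ : ContDiffOn ℝ (⊤:ℕ∞) y₂ (Set.Ioo a b))
    (hx0 : ∀ u ∈ Set.Ioo a b, x₂ u = 0)
    (hB : LittleOAt (Set.Ioo a b) (fun t s =>
        ‖tauTan (fun t' s' => s' * ‖deriv γ t'‖ + s' ^ 2 * x₂ t')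
          (fun t' s' => γ t' + (s' ^ 2) • y₂ t') t s‖) 2) :
    ∀ t ∈ Set.Ioo a b, y₂ t = (1 / 2 : ℝ) •
      (deriv (deriv γ) t
        - (2 * ⟪deriv γ t, deriv (deriv γ) t⟫ / ‖deriv γ t‖ ^ 2) • deriv γ t) := by
  intro t ht
  have hL : ‖deriv γ t‖ ≠ 0 := norm_ne_zero_iff.2 (hγ' t ht)
  set V : Euc n := deriv (deriv γ) t - (2:ℝ) • y₂ t
      - (2 * deriv (fun u => ‖deriv γ u‖) t / ‖deriv γ t‖) • deriv γ t with hVdef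
  set W : Euc n := deriv (deriv y₂) t
      - (2 * deriv (fun u => ‖deriv γ u‖) t / ‖deriv γ t‖) • deriv y₂ t with hWdef
  have hten : Filter.Tendsto (fun s : ℝ => ‖V + (s^2) • W‖)
      (nhdsWithin (0:ℝ) (Set.Ioi 0)) (nhds ‖V‖) := by
    have hc : Continuous (fun s : ℝ => ‖V + (s^2) • W‖) := by fun_prop
    have := (hc.tendsto 0).mono_left (nhdsWithin_le_nhds (s := Set.Ioi (0:ℝ)))
    simpa using this
  have hsmall : ∀ ε > 0, ‖V‖ ≤ ε := by
    intro ε hε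
    obtain ⟨δ, hδ, hBB⟩ := hB {t} (Set.singleton_subset_iff.2 ht) isCompact_singleton ε hε
    refine le_of_tendsto hten ?_
    filter_upwards [Ioo_mem_nhdsGT_of_mem (Set.left_mem_Ico.2 hδ)] with s hs
    have h2 := hBB s hs.1 hs.2 t rfl
    rw [abs_norm, tauTan_key hγ hγ' hx₂ hy₂ hx0 ht (ne_of_gt hs.1), norm_smul,
      Real.norm_eq_abs, abs_of_pos (pow_pos hs.1 2)] at h2
    have hs2 : (0:ℝ) < s^2 := pow_pos hs.1 2
    nlinarith [h2]
  have hV0 : V = 0 := by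
    have h0 : ‖V‖ ≤ 0 := by
      by_contra hne
      push_neg at hne
      linarith [hsmall (‖V‖/2) (by linarith)]
    exact norm_le_zero_iff.1 h0
  have hΛ : deriv (fun u => ‖deriv γ u‖) t
      = ⟪deriv γ t, deriv (deriv γ) t⟫ / ‖deriv γ t‖ :=
    lam_deriv_formula (myHasDerivAt (lam_smooth hγ hγ') ht)
      (myHasDerivAt (myContDiffOn_deriv hγ) ht) (hγ' t ht)
  have hcoef : 2 * deriv (fun u => ‖deriv γ u‖) t / ‖deriv γ t‖
      = 2 * ⟪deriv γ t, deriv (deriv γ) t⟫ / ‖deriv γ t‖ ^ 2 := by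
    rw [hΛ]; ring
  rw [hVdef, hcoef] at hV0
  have key2 : y₂ t - (1/2:ℝ) • (deriv (deriv γ) t
      - (2 * ⟪deriv γ t, deriv (deriv γ) t⟫ / ‖deriv γ t‖ ^ 2) • deriv γ t)
      = (-(1/2:ℝ)) • (deriv (deriv γ) t - (2:ℝ) • y₂ t
        - (2 * ⟪deriv γ t, deriv (deriv γ) t⟫ / ‖deriv γ t‖ ^ 2) • deriv γ t) := by
    module
  rw [hV0, smul_zero] at key2
  exact sub_eq_zero.mp key2

set_option maxHeartbeats 1000000 in
lemma backward_tau0 (hγ : ContDiffOn ℝ (⊤:ℕ∞) γ (Set.Ioo a b))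
    (hγ' : ∀ t ∈ Set.Ioo a b, deriv γ t ≠ 0)
    (hx₂ : ContDiffOn ℝ (⊤:ℕ∞) x₂ (Set.Ioo a b))
    (hy₂ : ContDiffOn ℝ (⊤:ℕ∞) y₂ (Set.Ioo a b))
    (hx0 : ∀ u ∈ Set.Ioo a b, x₂ u = 0) :
    LittleOAt (Set.Ioo a b) (fun t s =>
        |tau0 (fun t' s' => s' * ‖deriv γ t'‖ + s' ^ 2 * x₂ t')
          (fun t' s' => γ t' + (s' ^ 2) • y₂ t') t s|) 2 := by
  intro K hK hKc ε hε
  set M : ℝ → ℝ := fun t => |deriv (deriv (fun u => ‖deriv γ u‖)) t|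
    + (2*‖deriv γ t‖*‖deriv y₂ t‖ + 4*‖y₂ t‖^2 + (deriv (fun u => ‖deriv γ u‖) t)^2
        + ‖deriv y₂ t‖^2)/‖deriv γ t‖ with hMdef
  have hMc : ContinuousOn M (Set.Ioo a b) := by
    have hlam := lam_smooth hγ hγ'
    have h1 : ContinuousOn (fun t => |deriv (deriv (fun u => ‖deriv γ u‖)) t|)
        (Set.Ioo a b) := (myContDiffOn_deriv (myContDiffOn_deriv hlam)).continuousOn.abs
    have h2 : ContinuousOn (fun t => ‖deriv γ t‖) (Set.Ioo a b) := hlam.continuousOn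
    have h3 : ContinuousOn (fun t => ‖deriv y₂ t‖) (Set.Ioo a b) :=
      (myContDiffOn_deriv hy₂).continuousOn.norm
    have h4 : ContinuousOn (fun t => ‖y₂ t‖) (Set.Ioo a b) := hy₂.continuousOn.norm
    have h5 : ContinuousOn (fun t => deriv (fun u => ‖deriv γ u‖) t) (Set.Ioo a b) :=
      (myContDiffOn_deriv hlam).continuousOn
    exact h1.add ((((((continuousOn_const.mul h2).mul h3).add
      (continuousOn_const.mul (h4.pow 2))).add
      (h5.pow 2)).add (h3.pow 2)).div h2
      (fun t ht => norm_ne_zero_iff.2 (hγ' t ht)))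
  obtain ⟨C, hC⟩ := hKc.exists_bound_of_continuousOn (hMc.mono hK)
  have hC'pos : (0:ℝ) < max C 1 := lt_of_lt_of_le one_pos (le_max_right _ _)
  refine ⟨min 1 (ε / max C 1), by positivity, ?_⟩
  intro s hs hsδ t htK
  have ht := hK htK
  have hLpos : (0:ℝ) < ‖deriv γ t‖ := norm_pos_iff.2 (hγ' t ht)
  obtain ⟨hd1, hd2⟩ := derivs_zero hx0 ht
  obtain ⟨p1,p2,p3,p4,p5,_,p7,_⟩ := pd_package hγ hγ' hx₂ hy₂ ht s
  set L : ℝ := ‖deriv γ t‖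
  set Λ₁ : ℝ := deriv (fun u => ‖deriv γ u‖) t
  set Λ₂ : ℝ := deriv (deriv (fun u => ‖deriv γ u‖)) t
  set ip : ℝ := ⟪deriv γ t, deriv y₂ t⟫
  set nY0 : ℝ := ‖y₂ t‖^2
  set nY1 : ℝ := ‖deriv y₂ t‖^2
  have key := tau0_exact (fun t' s' => s' * ‖deriv γ t'‖ + s' ^ 2 * x₂ t')
    (fun t' s' => γ t' + (s' ^ 2) • y₂ t') t s (ne_of_gt hs)
    L 0 Λ₁ Λ₂ 0 0 (deriv γ t) (y₂ t) (deriv y₂ t)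
    (by show s * ‖deriv γ t‖ + s ^ 2 * x₂ t = s * L + s^2 * 0; rw [hx0 t ht])
    (by rw [p1, hx0 t ht])
    (by rw [p2, hx0 t ht])
    (by rw [p3, hd1])
    (by rw [p4, hd2])
    p5 p7 rfl
  have hform : tau0 (fun t' s' => s' * ‖deriv γ t'‖ + s' ^ 2 * x₂ t')
      (fun t' s' => γ t' + (s' ^ 2) • y₂ t') t s
      = s^2 * (s * (Λ₂ + (2*ip + 4*nY0 - Λ₁^2 + s^2*nY1)/L)) := by
    rw [key]; ring
  have hCS := abs_real_inner_le_norm (deriv γ t) (deriv y₂ t)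
  have hs1 : s ≤ 1 := le_of_lt (lt_of_lt_of_le hsδ (min_le_left _ _))
  have hsε : s * max C 1 ≤ ε := by
    have : s < ε / max C 1 := lt_of_lt_of_le hsδ (min_le_right _ _)
    calc s * max C 1 ≤ (ε / max C 1) * max C 1 := by nlinarith
      _ = ε := by field_simp
  have hNb : |2*ip + 4*nY0 - Λ₁^2 + s^2*nY1| ≤ 2*L*‖deriv y₂ t‖ + 4*nY0 + Λ₁^2 + nY1 := by
    have hip := abs_le.1 hCS
    have h1 : (0:ℝ) ≤ nY0 := sq_nonneg _
    have h2 : (0:ℝ) ≤ nY1 := sq_nonneg _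
    have h3 : (0:ℝ) ≤ Λ₁^2 := sq_nonneg _
    have h4 : (1 - s^2) * nY1 ≥ 0 := mul_nonneg (by nlinarith) h2
    have h5 : s^2 * nY1 ≥ 0 := mul_nonneg (by positivity) h2
    refine abs_le.2 ⟨by nlinarith, by nlinarith⟩
  have hΨ : |Λ₂ + (2*ip + 4*nY0 - Λ₁^2 + s^2*nY1)/L| ≤ M t := by
    have habs : |(2*ip + 4*nY0 - Λ₁^2 + s^2*nY1)/L|
        = |2*ip + 4*nY0 - Λ₁^2 + s^2*nY1|/L := by
      rw [abs_div, abs_of_pos hLpos]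
    calc |Λ₂ + (2*ip + 4*nY0 - Λ₁^2 + s^2*nY1)/L|
        ≤ |Λ₂| + |(2*ip + 4*nY0 - Λ₁^2 + s^2*nY1)/L| := abs_add_le _ _
      _ ≤ |Λ₂| + (2*L*‖deriv y₂ t‖ + 4*nY0 + Λ₁^2 + nY1)/L := by
          rw [habs]; gcongr
      _ = M t := by rw [hMdef]
  have hMC : M t ≤ max C 1 := by
    have := hC t htK
    rw [Real.norm_eq_abs] at this
    exact le_trans (le_abs_self _) (le_trans this (le_max_left _ _))
  have hfin : |tau0 (fun t' s' => s' * ‖deriv γ t'‖ + s' ^ 2 * x₂ t')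
      (fun t' s' => γ t' + (s' ^ 2) • y₂ t') t s| ≤ ε * s^2 := by
    rw [hform, abs_mul, abs_mul, abs_of_pos (pow_pos hs 2), abs_of_pos hs]
    have h6 : |Λ₂ + (2*ip + 4*nY0 - Λ₁^2 + s^2*nY1)/L| ≤ max C 1 := le_trans hΨ hMC
    calc s^2*(s*|Λ₂ + (2*ip + 4*nY0 - Λ₁^2 + s^2*nY1)/L|)
        ≤ s^2*(s*(max C 1)) := mul_le_mul_of_nonneg_left
            (mul_le_mul_of_nonneg_left h6 hs.le) (pow_pos hs 2).le
      _ ≤ s^2*ε := mul_le_mul_of_nonneg_left hsε (pow_pos hs 2).le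
      _ = ε*s^2 := mul_comm _ _
  simpa using hfin

lemma backward_tauTan (hγ : ContDiffOn ℝ (⊤:ℕ∞) γ (Set.Ioo a b))
    (hγ' : ∀ t ∈ Set.Ioo a b, deriv γ t ≠ 0)
    (hx₂ : ContDiffOn ℝ (⊤:ℕ∞) x₂ (Set.Ioo a b))
    (hy₂ : ContDiffOn ℝ (⊤:ℕ∞) y₂ (Set.Ioo a b))
    (hx0 : ∀ u ∈ Set.Ioo a b, x₂ u = 0)
    (hyF : ∀ t ∈ Set.Ioo a b, y₂ t = (1 / 2 : ℝ) •
      (deriv (deriv γ) t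
        - (2 * ⟪deriv γ t, deriv (deriv γ) t⟫ / ‖deriv γ t‖ ^ 2) • deriv γ t)) :
    LittleOAt (Set.Ioo a b) (fun t s =>
        ‖tauTan (fun t' s' => s' * ‖deriv γ t'‖ + s' ^ 2 * x₂ t')
          (fun t' s' => γ t' + (s' ^ 2) • y₂ t') t s‖) 2 := by
  intro K hK hKc ε hε
  set M : ℝ → ℝ := fun t => ‖deriv (deriv y₂) t
      - (2 * deriv (fun u => ‖deriv γ u‖) t / ‖deriv γ t‖) • deriv y₂ t‖ with hMdef
  have hMc : ContinuousOn M (Set.Ioo a b) := by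
    have hlam := lam_smooth hγ hγ'
    have h2 : ContinuousOn (fun t => ‖deriv γ t‖) (Set.Ioo a b) := hlam.continuousOn
    have h5 : ContinuousOn (fun t => deriv (fun u => ‖deriv γ u‖) t) (Set.Ioo a b) :=
      (myContDiffOn_deriv hlam).continuousOn
    have hcoef : ContinuousOn (fun t => 2 * deriv (fun u => ‖deriv γ u‖) t / ‖deriv γ t‖)
        (Set.Ioo a b) :=
      (continuousOn_const.mul h5).div h2 (fun t ht => norm_ne_zero_iff.2 (hγ' t ht))
    exact (((myContDiffOn_deriv (myContDiffOn_deriv hy₂)).continuousOn).sub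
      (hcoef.smul (myContDiffOn_deriv hy₂).continuousOn)).norm
  obtain ⟨C, hC⟩ := hKc.exists_bound_of_continuousOn (hMc.mono hK)
  have hC'pos : (0:ℝ) < max C 1 := lt_of_lt_of_le one_pos (le_max_right _ _)
  refine ⟨min 1 (ε / max C 1), by positivity, ?_⟩
  intro s hs hsδ t htK
  have ht := hK htK
  have hL : ‖deriv γ t‖ ≠ 0 := norm_ne_zero_iff.2 (hγ' t ht)
  have key := tauTan_key hγ hγ' hx₂ hy₂ hx0 ht (ne_of_gt hs)
  have hΛ : deriv (fun u => ‖deriv γ u‖) t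
      = ⟪deriv γ t, deriv (deriv γ) t⟫ / ‖deriv γ t‖ :=
    lam_deriv_formula (myHasDerivAt (lam_smooth hγ hγ') ht)
      (myHasDerivAt (myContDiffOn_deriv hγ) ht) (hγ' t ht)
  have hV0 : deriv (deriv γ) t - (2:ℝ) • y₂ t
      - (2 * deriv (fun u => ‖deriv γ u‖) t / ‖deriv γ t‖) • deriv γ t = 0 := by
    rw [hyF t ht, hΛ]
    match_scalars
    · ring
    · field_simp
      ring
  rw [hV0, zero_add] at key
  have hs1 : s ≤ 1 := le_of_lt (lt_of_lt_of_le hsδ (min_le_left _ _))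
  have hsε : s * max C 1 ≤ ε := by
    have : s < ε / max C 1 := lt_of_lt_of_le hsδ (min_le_right _ _)
    calc s * max C 1 ≤ (ε / max C 1) * max C 1 := by nlinarith
      _ = ε := by field_simp
  have hMC : M t ≤ max C 1 := by
    have := hC t htK
    rw [Real.norm_eq_abs] at this
    exact le_trans (le_abs_self _) (le_trans this (le_max_left _ _))
  have hfin : ‖tauTan (fun t' s' => s' * ‖deriv γ t'‖ + s' ^ 2 * x₂ t')
      (fun t' s' => γ t' + (s' ^ 2) • y₂ t') t s‖ ≤ ε * s^2 := by
    rw [key, norm_smul, norm_smul, Real.norm_eq_abs, abs_of_pos (pow_pos hs 2)]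
    have h0 : (0:ℝ) ≤ M t := norm_nonneg _
    have hMt : ‖deriv (deriv y₂) t
        - (2 * deriv (fun u => ‖deriv γ u‖) t / ‖deriv γ t‖) • deriv y₂ t‖ = M t := by
      rw [hMdef]
    rw [hMt]
    calc s^2*(s^2*M t) ≤ s^2*(s*(max C 1)) := by
          refine mul_le_mul_of_nonneg_left ?_ (le_of_lt (pow_pos hs 2))
          nlinarith [mul_nonneg (mul_nonneg hs.le (sub_nonneg.2 hs1)) h0,
            mul_nonneg hs.le (sub_nonneg.2 hMC)]
      _ ≤ s^2*ε := mul_le_mul_of_nonneg_left hsε (le_of_lt (pow_pos hs 2))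
      _ = ε*s^2 := mul_comm _ _
  simpa using hfin

end MainLemmas


/-- For `u(t,s) = (s·λ(t) + s²·x₂(t), γ(t) + s²·y₂(t))` with `λ = |γ'|`, the
tension field satisfies `τ(u)⁰ = o(s²)` and `τ(u)ⁱ = o(s²)` iff `x₂ ≡ 0` and
`y₂ = (1/2)(γ'' − (2⟨γ',γ''⟩/λ²)γ') = (1/2)λ²α`. -/
theorem second_order_coefficients_of_asymptotically_harmonic_map
    (n : ℕ) (hn : 2 ≤ n) (a b : ℝ)
    (γ y₂ : ℝ → Euc n) (x₂ : ℝ → ℝ)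
    (hγ : ContDiffOn ℝ (⊤ : ℕ∞) γ (Set.Ioo a b))
    (hγ' : ∀ t ∈ Set.Ioo a b, deriv γ t ≠ 0)
    (hx₂ : ContDiffOn ℝ (⊤ : ℕ∞) x₂ (Set.Ioo a b))
    (hy₂ : ContDiffOn ℝ (⊤ : ℕ∞) y₂ (Set.Ioo a b)) :
    (LittleOAt (Set.Ioo a b) (fun t s =>
        |tau0 (fun t' s' => s' * ‖deriv γ t'‖ + s' ^ 2 * x₂ t')
          (fun t' s' => γ t' + (s' ^ 2) • y₂ t') t s|) 2 ∧
      LittleOAt (Set.Ioo a b) (fun t s =>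
        ‖tauTan (fun t' s' => s' * ‖deriv γ t'‖ + s' ^ 2 * x₂ t')
          (fun t' s' => γ t' + (s' ^ 2) • y₂ t') t s‖) 2)
    ↔ ((∀ t ∈ Set.Ioo a b, x₂ t = 0) ∧
       (∀ t ∈ Set.Ioo a b, y₂ t = (1 / 2 : ℝ) •
          (deriv (deriv γ) t
            - (2 * ⟪deriv γ t, deriv (deriv γ) t⟫ / ‖deriv γ t‖ ^ 2) • deriv γ t))) := by
  constructor
  · rintro ⟨hA, hB⟩
    have hx0 := forward_x hγ hγ' hx₂ hy₂ hA
    exact ⟨hx0, forward_y hγ hγ' hx₂ hy₂ hx0 hB⟩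
  · rintro ⟨hx0, hyF⟩
    exact ⟨backward_tau0 hγ hγ' hx₂ hy₂ hx0, backward_tauTan hγ hγ' hx₂ hy₂ hx0 hyF⟩
end
end
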